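/- Every codeword of the golden code X = (1/√5)·[[α(a+bθ), α(c+dθ)], [iσ(α)(c+dσ(θ)), σ(α)(a+bσ(θ))]], with a,b,c,d ∈ ℤ[i] not all zero, satisfies |det(X)|² ≥ 1/5, and this minimum determinant 1/5 is attained. -/
import Mathlib

open Complex Matrix

def phi5 : GaussianInt →+* ZMod 5 := Zsqrtd.lift ⟨3, by decide⟩

lemma phi5_apply (x : GaussianInt) : phi5 x = (x.re : ZMod 5) + (x.im : ZMod 5) * 3 := by
  simp [phi5]

lemma phi5_pi : phi5 ⟨2, 1⟩ = 0 := by rw [phi5_apply]; decide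

lemma pi_dvd_of_phi5 {x : GaussianInt} (h : phi5 x = 0) : (⟨2, 1⟩ : GaussianInt) ∣ x := by
  rw [phi5_apply] at h
  have h5 : (5 : ℤ) ∣ x.re + x.im * 3 := by
    have := (ZMod.intCast_zmod_eq_zero_iff_dvd (x.re + x.im * 3) 5).mp (by push_cast; exact h)
    exact_mod_cast this
  obtain ⟨k, hk⟩ := h5
  refine ⟨⟨2 * k - x.im, x.im - k⟩, ?_⟩
  have hre : x.re = 5 * k - 3 * x.im := by linarith
  ext <;> simp [Zsqrtd.re_mul, Zsqrtd.im_mul] <;> omega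

lemma zmod5_sq : ∀ x y : ZMod 5, x ^ 2 = 3 * y ^ 2 → x = 0 ∧ y = 0 := by decide

lemma norm_pi_mul (x : GaussianInt) :
    ((⟨2, 1⟩ : GaussianInt) * x).norm.natAbs = 5 * x.norm.natAbs := by
  rw [Zsqrtd.norm_mul, Int.natAbs_mul]
  norm_num [Zsqrtd.norm]

lemma natAbs_norm_pos {x : GaussianInt} (h : x ≠ 0) : 1 ≤ x.norm.natAbs :=
  Int.natAbs_pos.mpr fun hz => h ((Zsqrtd.norm_eq_zero_iff (by norm_num) x).mp hz)

instance : Fact (Nat.Prime 5) := ⟨by norm_num⟩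

lemma descent_aux : ∀ n : ℕ, ∀ u v w : GaussianInt,
    u.norm.natAbs + v.norm.natAbs + w.norm.natAbs ≤ n →
    u ^ 2 - 5 * v ^ 2 = ⟨0, 1⟩ * w ^ 2 → u = 0 ∧ v = 0 ∧ w = 0 := by
  intro n
  induction n using Nat.strong_induction_on with
  | _ n ih =>
    intro u v w hn heq
    by_cases h0 : u = 0 ∧ v = 0 ∧ w = 0
    · exact h0
    have hphi : phi5 u ^ 2 = 3 * phi5 w ^ 2 := by
      have h2 := congrArg phi5 heq
      simp only [map_sub, _root_.map_mul, map_pow, map_ofNat] at h2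
      have e1 : (5 : ZMod 5) = 0 := by decide
      have e2 : phi5 ⟨0, 1⟩ = 3 := by rw [phi5_apply]; decide
      rw [e1, e2] at h2
      linear_combination h2
    obtain ⟨hu0, hw0⟩ := zmod5_sq _ _ hphi
    obtain ⟨u', rfl⟩ := pi_dvd_of_phi5 hu0
    obtain ⟨w', rfl⟩ := pi_dvd_of_phi5 hw0
    have hπbar : (⟨2, -1⟩ : GaussianInt) * v ^ 2 =
        (⟨2, 1⟩ : GaussianInt) * (u' ^ 2 - ⟨0, 1⟩ * w' ^ 2) := by
      have h5 : (5 : GaussianInt) = ⟨2, 1⟩ * ⟨2, -1⟩ := by ext <;> decide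
      apply mul_left_cancel₀ (show (⟨2, 1⟩ : GaussianInt) ≠ 0 from by decide)
      rw [h5] at heq
      linear_combination -heq
    have hv0 : phi5 v = 0 := by
      have h2 := congrArg phi5 hπbar
      simp only [_root_.map_mul, map_pow, phi5_pi, zero_mul] at h2
      have e3 : phi5 ⟨2, -1⟩ = -1 := by rw [phi5_apply]; decide
      rw [e3] at h2
      have hsq : phi5 v ^ 2 = 0 := by linear_combination -h2
      exact pow_eq_zero_iff (n := 2) (by norm_num) |>.mp hsq
    obtain ⟨v', rfl⟩ := pi_dvd_of_phi5 hv0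
    have heq' : u' ^ 2 - 5 * v' ^ 2 = ⟨0, 1⟩ * w' ^ 2 := by
      apply mul_left_cancel₀ (show ((⟨2, 1⟩ : GaussianInt)) ^ 2 ≠ 0 from by decide)
      linear_combination heq
    have hne : ¬(u' = 0 ∧ v' = 0 ∧ w' = 0) := by
      rintro ⟨rfl, rfl, rfl⟩
      exact h0 ⟨mul_zero _, mul_zero _, mul_zero _⟩
    have hm : 1 ≤ u'.norm.natAbs + v'.norm.natAbs + w'.norm.natAbs := by
      rcases not_and_or.mp hne with h | h
      · have := natAbs_norm_pos h; omega
      rcases not_and_or.mp h with h | h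
      · have := natAbs_norm_pos h; omega
      · have := natAbs_norm_pos h; omega
    rw [norm_pi_mul, norm_pi_mul, norm_pi_mul] at hn
    obtain ⟨rfl, rfl, rfl⟩ :=
      ih (u'.norm.natAbs + v'.norm.natAbs + w'.norm.natAbs) (by omega) u' v' w' le_rfl heq'
    exact ⟨mul_zero _, mul_zero _, mul_zero _⟩

lemma descent {u v w : GaussianInt} (heq : u ^ 2 - 5 * v ^ 2 = ⟨0, 1⟩ * w ^ 2) :
    u = 0 ∧ v = 0 ∧ w = 0 :=
  descent_aux _ u v w le_rfl heq

lemma key {a b c d : GaussianInt}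
    (h : a ^ 2 + a * b - b ^ 2 = ⟨0, 1⟩ * (c ^ 2 + c * d - d ^ 2)) :
    a = 0 ∧ b = 0 ∧ c = 0 ∧ d = 0 := by
  have two_ne : (2 : GaussianInt) ≠ 0 := by decide
  have e1 : (2 * a + b) ^ 2 - 5 * b ^ 2 = ⟨0, 1⟩ * ((2 * c + d) ^ 2 - 5 * d ^ 2) := by
    linear_combination 4 * h
  have e2 : ((2 * a + b) * (2 * c + d) + 5 * b * d) ^ 2 -
      5 * ((2 * a + b) * d + b * (2 * c + d)) ^ 2
      = ⟨0, 1⟩ * ((2 * c + d) ^ 2 - 5 * d ^ 2) ^ 2 := by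
    linear_combination ((2 * c + d) ^ 2 - 5 * d ^ 2) * e1
  obtain ⟨-, -, e3⟩ := descent e2
  have e4 : (2 * c + d) ^ 2 - 5 * d ^ 2 = ⟨0, 1⟩ * (0 : GaussianInt) ^ 2 := by
    rw [e3]; ring
  obtain ⟨hcd, hd, -⟩ := descent e4
  have hc : c = 0 := by
    rcases mul_eq_zero.mp (show (2 : GaussianInt) * c = 0 by linear_combination hcd - hd) with
      h' | h'
    · exact absurd h' two_ne
    · exact h'
  have e5 : (2 * a + b) ^ 2 - 5 * b ^ 2 = ⟨0, 1⟩ * (0 : GaussianInt) ^ 2 := by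
    rw [hc, hd] at e1; rw [e1]; ring
  obtain ⟨hab, hb, -⟩ := descent e5
  have ha : a = 0 := by
    rcases mul_eq_zero.mp (show (2 : GaussianInt) * a = 0 by linear_combination hab - hb) with
      h' | h'
    · exact absurd h' two_ne
    · exact h'
  exact ⟨ha, hb, hc, hd⟩

noncomputable def θc : ℂ := (1 + Real.sqrt 5) / 2
noncomputable def θb : ℂ := 1 - θc
noncomputable def αc : ℂ := 1 + Complex.I * θb
noncomputable def σαc : ℂ := 1 + Complex.I * θc
noncomputable abbrev tc : GaussianInt →+* ℂ := GaussianInt.toComplex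

/-- Golden codeword associated with a,b,c,d ∈ ℤ[i]. -/
noncomputable def GCword (a b c d : GaussianInt) : Matrix (Fin 2) (Fin 2) ℂ :=
  (1 / Real.sqrt 5 : ℝ) •
    !![αc * (tc a + tc b * θc), αc * (tc c + tc d * θc);
       Complex.I * σαc * (tc c + tc d * θb), σαc * (tc a + tc b * θb)]


lemma sqrt5_sq : ((Real.sqrt 5 : ℝ) : ℂ) * ((Real.sqrt 5 : ℝ) : ℂ) = 5 := by
  norm_cast
  exact Real.mul_self_sqrt (by norm_num)

lemma theta_sum : θc + θb = 1 := by unfold θb; ring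

lemma theta_prod : θc * θb = -1 := by
  unfold θb θc
  linear_combination (-(1 : ℂ) / 4) * sqrt5_sq

lemma alpha_prod : αc * σαc = 2 + Complex.I := by
  unfold αc σαc
  linear_combination Complex.I * theta_sum + (Complex.I ^ 2) * theta_prod - Complex.I_sq

lemma quad_prod (A B : ℂ) : (A + B * θc) * (A + B * θb) = A ^ 2 + A * B - B ^ 2 := by
  linear_combination (A * B) * theta_sum + (B ^ 2) * theta_prod

lemma det_eq (a b c d : GaussianInt) :
    (GCword a b c d).det = (2 + Complex.I) / 5 *
      tc ((a ^ 2 + a * b - b ^ 2) - ⟨0, 1⟩ * (c ^ 2 + c * d - d ^ 2)) := by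
  have hsmul : GCword a b c d = (((1 / Real.sqrt 5 : ℝ) : ℂ)) •
      !![αc * (tc a + tc b * θc), αc * (tc c + tc d * θc);
         Complex.I * σαc * (tc c + tc d * θb), σαc * (tc a + tc b * θb)] := by
    unfold GCword
    ext i j
    simp [Complex.real_smul]
  rw [hsmul, Matrix.det_smul, Matrix.det_fin_two_of]
  have htc : tc ((a ^ 2 + a * b - b ^ 2) - ⟨0, 1⟩ * (c ^ 2 + c * d - d ^ 2)) =
      (tc a ^ 2 + tc a * tc b - tc b ^ 2) -
        Complex.I * (tc c ^ 2 + tc c * tc d - tc d ^ 2) := by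
    have hi : tc ⟨0, 1⟩ = Complex.I := by
      rw [GaussianInt.toComplex_def]; simp
    simp only [map_sub, map_add, _root_.map_mul, map_pow, hi]
  rw [htc]
  have hc2 : (((1 / Real.sqrt 5 : ℝ) : ℂ)) ^ (Fintype.card (Fin 2)) = 1 / 5 := by
    simp only [Fintype.card_fin]
    push_cast
    rw [one_div, inv_pow, pow_two, sqrt5_sq]
    norm_num
  rw [hc2]
  have e1 : αc * (tc a + tc b * θc) * (σαc * (tc a + tc b * θb)) =
      (2 + Complex.I) * (tc a ^ 2 + tc a * tc b - tc b ^ 2) := by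
    rw [show αc * (tc a + tc b * θc) * (σαc * (tc a + tc b * θb)) =
      (αc * σαc) * ((tc a + tc b * θc) * (tc a + tc b * θb)) from by ring,
      alpha_prod, quad_prod]
  have e2 : αc * (tc c + tc d * θc) * (Complex.I * σαc * (tc c + tc d * θb)) =
      Complex.I * ((2 + Complex.I) * (tc c ^ 2 + tc c * tc d - tc d ^ 2)) := by
    rw [show αc * (tc c + tc d * θc) * (Complex.I * σαc * (tc c + tc d * θb)) =
      Complex.I * ((αc * σαc) * ((tc c + tc d * θc) * (tc c + tc d * θb))) from by ring,
      alpha_prod, quad_prod]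
  rw [e1, e2]
  ring

lemma normSq_det (a b c d : GaussianInt) :
    Complex.normSq (GCword a b c d).det =
      (((a ^ 2 + a * b - b ^ 2) - (⟨0, 1⟩ : GaussianInt) * (c ^ 2 + c * d - d ^ 2)).norm : ℝ) / 5 := by
  rw [det_eq, _root_.map_mul]
  have h1 : Complex.normSq ((2 + Complex.I) / 5) = 1 / 5 := by
    rw [map_div₀]
    simp [Complex.normSq_apply]
    norm_num
  have h2 : Complex.normSq (tc ((a ^ 2 + a * b - b ^ 2) - ⟨0, 1⟩ * (c ^ 2 + c * d - d ^ 2))) =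
      (((a ^ 2 + a * b - b ^ 2) - (⟨0, 1⟩ : GaussianInt) * (c ^ 2 + c * d - d ^ 2)).norm : ℝ) :=
    (GaussianInt.intCast_real_norm _).symm
  rw [h1, h2]
  ring

/-- Every nonzero golden codeword has |det X|² ≥ 1/5, and 1/5 is attained. -/
theorem stmt12 :
    (∀ a b c d : GaussianInt, ¬(a = 0 ∧ b = 0 ∧ c = 0 ∧ d = 0) →
      (1 : ℝ) / 5 ≤ Complex.normSq (GCword a b c d).det) ∧
    (∃ a b c d : GaussianInt, ¬(a = 0 ∧ b = 0 ∧ c = 0 ∧ d = 0) ∧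
      Complex.normSq (GCword a b c d).det = 1 / 5) := by
  constructor
  · intro a b c d h
    rw [normSq_det]
    set M : GaussianInt := (a ^ 2 + a * b - b ^ 2) - (⟨0, 1⟩ : GaussianInt) * (c ^ 2 + c * d - d ^ 2) with hM
    have hM0 : M ≠ 0 := by
      intro h0
      exact h (key (sub_eq_zero.mp (hM ▸ h0)))
    have h1 : 1 ≤ M.norm := GaussianInt.norm_pos.mpr hM0
    have h2 : (1 : ℝ) ≤ (M.norm : ℝ) := by exact_mod_cast h1
    linarith
  · refine ⟨1, 0, 0, 0, by simp, ?_⟩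
    rw [normSq_det]
    have hM : ((1 : GaussianInt) ^ 2 + 1 * 0 - 0 ^ 2) - (⟨0, 1⟩ : GaussianInt) * (0 ^ 2 + 0 * 0 - 0 ^ 2)
        = 1 := by ring
    rw [hM]
    simp
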